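/- A symmetric doubly stochastic n×n matrix F is an extreme point of the polytope of symmetric doubly stochastic matrices if and only if, up to simultaneous permutation of rows and columns, F is block diagonal with blocks of the forms: the 1×1 matrix [1], the 2×2 matrix [[0,1],[1,0]], or (1/2)A(C_{2j-1}) for odd cycles C_{2j-1} with j ≥ 2. -/

import Mathlib

/-- The polytope of `n × n` symmetric doubly stochastic matrices. -/
def symDS (n : ℕ) : Set (Matrix (Fin n) (Fin n) ℝ) :=
  {F | F.IsSymm ∧ (∀ i j, 0 ≤ F i j) ∧ ∀ i, ∑ j, F i j = 1}

/-- Adjacency relation of the cycle on `m` vertices `0, 1, …, m-1` (edges `i ~ i+1 mod m`). -/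
def cycleAdj (m : ℕ) (x y : Fin m) : Prop :=
  ((x : ℕ) + 1) % m = (y : ℕ) ∨ ((y : ℕ) + 1) % m = (x : ℕ)

instance (m : ℕ) (x y : Fin m) : Decidable (cycleAdj m x y) := by
  unfold cycleAdj; infer_instance

/-- A square matrix `M` of size `s` is one of Katz's three block types:
(i) the `1 × 1` matrix `[1]`; (ii) the `2 × 2` matrix `[[0,1],[1,0]]`;
(iii) `(1/2) A(C_s)` for an odd cycle `C_s` with `s = 2j-1 ≥ 3`. -/
def IsKatzBlock (s : ℕ) (M : Fin s → Fin s → ℝ) : Prop :=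
  (s = 1 ∧ ∀ x y, M x y = 1) ∨
  (s = 2 ∧ ∀ x y, M x y = if x = y then 0 else 1) ∨
  (3 ≤ s ∧ Odd s ∧ ∀ x y, M x y = if cycleAdj s x y then 1 / 2 else 0)

open Finset

/-- The kernel/rigidity condition characterizing extreme points. -/
def Kern (n : ℕ) (F : Matrix (Fin n) (Fin n) ℝ) : Prop :=
  ∀ E : Matrix (Fin n) (Fin n) ℝ, (∀ i j, E i j = E j i) →
    (∀ i j, F i j = 0 → E i j = 0) → (∀ i, ∑ j, E i j = 0) → E = 0

/-- The block-decomposition conclusion of Katz's theorem. -/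
def KatzDecomp (n : ℕ) (F : Matrix (Fin n) (Fin n) ℝ) : Prop :=
  ∃ (m : ℕ) (sizes : Fin m → ℕ) (e : Fin n ≃ (Σ b : Fin m, Fin (sizes b))),
    (∀ i j : Fin n, (e i).1 ≠ (e j).1 → F i j = 0) ∧
    ∀ b : Fin m, IsKatzBlock (sizes b) (fun x y => F (e.symm ⟨b, x⟩) (e.symm ⟨b, y⟩))

section Cyc

variable {s : ℕ} [NeZero s]

open Fin.CommRing Fin.NatCast

lemma val_add_one (hs : 3 ≤ s) (x : Fin s) :
    ((x + 1 : Fin s) : ℕ) = ((x : ℕ) + 1) % s := by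
  rw [Fin.add_def]
  simp [Fin.val_one', Nat.mod_eq_of_lt (show 1 < s by omega)]

lemma cycleAdj_iff (hs : 3 ≤ s) (x y : Fin s) :
    cycleAdj s x y ↔ y = x + 1 ∨ y = x - 1 := by
  have h1 : (((x : ℕ) + 1) % s = (y : ℕ)) ↔ y = x + 1 := by
    rw [Fin.ext_iff, val_add_one hs]; exact eq_comm
  have h2 : (((y : ℕ) + 1) % s = (x : ℕ)) ↔ x = y + 1 := by
    rw [Fin.ext_iff, val_add_one hs]; exact eq_comm
  have h3 : x = y + 1 ↔ y = x - 1 := by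
    rw [eq_sub_iff_add_eq, eq_comm]
  unfold cycleAdj
  rw [h1, h2, h3]

lemma fin_two_ne_zero (hs : 3 ≤ s) : ((1 : Fin s) + 1 ≠ 0) := by
  intro h
  have := congrArg Fin.val h
  rw [val_add_one hs] at this
  simp [Fin.val_one', Nat.mod_eq_of_lt (show 1 < s by omega),
    Nat.mod_eq_of_lt (show 2 < s by omega)] at this

lemma sub_one_ne_add_one (hs : 3 ≤ s) (x : Fin s) : (x - 1 ≠ x + 1) := by
  intro h
  have : (x + 1) - (x - 1) = 0 := by rw [← h]; simp
  rw [show (x + 1) - (x - 1) = 1 + 1 by ring] at this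
  exact fin_two_ne_zero hs this

lemma add_one_ne_self (hs : 3 ≤ s) (x : Fin s) : (x + 1 ≠ x) := by
  intro h
  have h1 : (1 : Fin s) = 0 := by
    have := congrArg (· - x) h
    simpa [add_comm, add_sub_cancel_right] using this
  have := congrArg Fin.val h1
  simp [Fin.val_one', Nat.mod_eq_of_lt (show 1 < s by omega)] at this

lemma sum_cycle_support (hs : 3 ≤ s) (M : Fin s → Fin s → ℝ) (x : Fin s)
    (h0 : ∀ y, ¬ cycleAdj s x y → M x y = 0) :
    ∑ y, M x y = M x (x - 1) + M x (x + 1) := by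
  have hne : (x - 1 : Fin s) ≠ x + 1 := sub_one_ne_add_one hs x
  have hsub : ({x - 1, x + 1} : Finset (Fin s)) ⊆ univ := subset_univ _
  rw [← Finset.sum_sdiff hsub, Finset.sum_pair hne]
  have h1 : ∑ y ∈ univ \ {x - 1, x + 1}, M x y = 0 := by
    apply Finset.sum_eq_zero
    intro y hy
    simp only [Finset.mem_sdiff, Finset.mem_insert, Finset.mem_singleton] at hy
    apply h0
    rw [cycleAdj_iff hs]
    tauto
  rw [h1, zero_add]

lemma cycle_kernel (hs : 3 ≤ s) (hodd : Odd s) (E : Fin s → Fin s → ℝ)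
    (hsym : ∀ x y, E x y = E y x)
    (hsupp : ∀ x y, ¬ cycleAdj s x y → E x y = 0)
    (hrow : ∀ x, ∑ y, E x y = 0) : ∀ x y, E x y = 0 := by
  have key : ∀ x : Fin s, E x (x - 1) + E x (x + 1) = 0 := fun x => by
    rw [← sum_cycle_support hs E x (hsupp x)]; exact hrow x
  set u : Fin s → ℝ := fun x => E x (x + 1) with hu
  have rel : ∀ x : Fin s, u (x + 1) = - u x := by
    intro x
    have h := key (x + 1)
    have h2 : (x + 1 : Fin s) - 1 = x := by ring
    rw [h2] at h
    have h3 : E (x + 1) x = u x := by rw [hu]; exact hsym _ _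
    rw [h3] at h
    simp only [hu]
    linarith
  have pow : ∀ k : ℕ, u ((k : Fin s)) = (-1 : ℝ) ^ k * u 0 := by
    intro k
    induction k with
    | zero => simp
    | succ k ih =>
      have : ((k + 1 : ℕ) : Fin s) = (k : Fin s) + 1 := by push_cast; ring
      rw [this, rel, ih, pow_succ]
      ring
  have hu0 : u 0 = 0 := by
    have h := pow s
    rw [Fin.natCast_self, hodd.neg_one_pow] at h
    linarith
  have hux : ∀ x : Fin s, u x = 0 := by
    intro x
    have := pow x.val
    rw [Fin.cast_val_eq_self] at this
    rw [this, hu0, mul_zero]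
  intro x y
  by_cases hadj : cycleAdj s x y
  · rw [cycleAdj_iff hs] at hadj
    rcases hadj with h | h
    · rw [h]; exact hux x
    · have hx : x = y + 1 := by rw [h]; ring
      rw [hx, hsym]; exact hux y
  · exact hsupp x y hadj

lemma cycleAdj_self_left (hs : 3 ≤ s) (x : Fin s) :
    cycleAdj s x (x - 1) ∧ cycleAdj s x (x + 1) := by
  constructor <;> rw [cycleAdj_iff hs] <;> simp

lemma cycle_half_row (hs : 3 ≤ s) (x : Fin s) :
    ∑ y, (if cycleAdj s x y then (1:ℝ)/2 else 0) = 1 := by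
  rw [sum_cycle_support hs (fun a b => if cycleAdj s a b then (1:ℝ)/2 else 0) x
    (fun y hy => by simp [hy])]
  simp only [if_pos (cycleAdj_self_left hs x).1, if_pos (cycleAdj_self_left hs x).2]
  norm_num

end Cyc

lemma extreme_iff_kern {n : ℕ} {F : Matrix (Fin n) (Fin n) ℝ} (hF : F ∈ symDS n) :
    F ∈ Set.extremePoints ℝ (symDS n) ↔ Kern n F := by
  constructor
  · rintro ⟨-, hext⟩ E hsym hsupp hrow
    by_contra hE0
    have hEex : ∃ p : Fin n × Fin n, E p.1 p.2 ≠ 0 := by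
      by_contra h
      push_neg at h
      exact hE0 (by ext i j; simpa using h (i, j))
    obtain ⟨p0, hp0⟩ := hEex
    haveI : Nonempty (Fin n × Fin n) := ⟨p0⟩
    set c : ℝ := univ.sup' univ_nonempty (fun p : Fin n × Fin n => |E p.1 p.2|) with hc
    have hcpos : 0 < c := by
      rw [hc]
      exact lt_of_lt_of_le (abs_pos.2 hp0)
        (Finset.le_sup' (fun p : Fin n × Fin n => |E p.1 p.2|) (mem_univ p0))
    set T : Finset (Fin n × Fin n) := univ.filter (fun p => F p.1 p.2 ≠ 0) with hT
    have hp0T : p0 ∈ T := by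
      simp only [hT, Finset.mem_filter, mem_univ, true_and]
      intro h
      exact hp0 (hsupp _ _ h)
    have hTne : T.Nonempty := ⟨p0, hp0T⟩
    set δ : ℝ := T.inf' hTne (fun p => F p.1 p.2) with hδ
    have hδpos : 0 < δ := by
      rw [hδ, Finset.lt_inf'_iff]
      intro p hp
      simp only [hT, Finset.mem_filter] at hp
      exact lt_of_le_of_ne (hF.2.1 _ _) (Ne.symm hp.2)
    set ε : ℝ := δ / c with hε
    have hεpos : 0 < ε := div_pos hδpos hcpos
    have hbound : ∀ i j, F i j ≠ 0 → |ε * E i j| ≤ F i j := by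
      intro i j hij
      have h1 : |E i j| ≤ c := by
        rw [hc]
        exact Finset.le_sup' (fun p : Fin n × Fin n => |E p.1 p.2|) (mem_univ (i, j))
      have h2 : δ ≤ F i j := by
        rw [hδ]
        exact Finset.inf'_le (fun p : Fin n × Fin n => F p.1 p.2)
          (show (i, j) ∈ T by simp [hT, hij])
      rw [abs_mul, abs_of_pos hεpos]
      calc ε * |E i j| ≤ ε * c := by nlinarith
        _ = δ := by rw [hε]; field_simp
        _ ≤ F i j := h2
    have hmemAB : ∀ σ : ℝ, |σ| = 1 → F + (σ * ε) • E ∈ symDS n := by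
      intro σ hσ
      refine ⟨?_, ?_, ?_⟩
      · rw [Matrix.IsSymm]
        ext i j
        simp only [Matrix.transpose_apply, Matrix.add_apply, Matrix.smul_apply, smul_eq_mul]
        rw [hF.1.apply, hsym]
      · intro i j
        by_cases hij : F i j = 0
        · simp [hij, hsupp _ _ hij]
        · simp only [Matrix.add_apply, Matrix.smul_apply, smul_eq_mul]
          have := hbound i j hij
          have habs : |σ * ε * E i j| ≤ F i j := by
            rw [mul_assoc, abs_mul, hσ, one_mul]; exact this
          have := neg_abs_le (σ * ε * E i j)
          linarith [abs_nonneg (σ * ε * E i j)]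
      · intro i
        simp only [Matrix.add_apply, Matrix.smul_apply, smul_eq_mul]
        rw [Finset.sum_add_distrib, hF.2.2 i, ← Finset.mul_sum, hrow i]
        ring
    have hA := hmemAB 1 (by norm_num)
    have hB := hmemAB (-1) (by norm_num)
    simp only [one_mul, neg_one_mul, neg_smul] at hA hB
    have hopen : F ∈ openSegment ℝ (F + ε • E) (F - ε • E) := by
      refine ⟨1/2, 1/2, by norm_num, by norm_num, by norm_num, ?_⟩
      ext i j
      simp only [Matrix.add_apply, Matrix.sub_apply, Matrix.smul_apply, smul_eq_mul]
      ring
    have := (hext hA (show F - ε • E ∈ symDS n by simpa [sub_eq_add_neg] using hB) hopen)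
    have hεE : ε • E = 0 := by
      have := congrArg (· - F) this
      simpa [add_sub_cancel_left] using this
    apply hE0
    ext i j
    have := congrFun (congrFun hεE i) j
    simp only [Matrix.smul_apply, smul_eq_mul, Matrix.zero_apply] at this ⊢
    rcases mul_eq_zero.1 this with h | h
    · exact absurd h (ne_of_gt hεpos)
    · exact h
  · intro hK
    refine ⟨hF, ?_⟩
    intro A hA B hB hseg
    obtain ⟨a, b, ha, hb, hab, heq⟩ := hseg
    have key : ∀ G : Matrix (Fin n) (Fin n) ℝ, G ∈ symDS n →
        (∀ i j, F i j = 0 → G i j = 0) → G = F := by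
      intro G hG hGsupp
      have := hK (G - F) (fun i j => by
          simp only [Matrix.sub_apply]
          rw [hG.1.apply, hF.1.apply])
        (fun i j h => by simp [Matrix.sub_apply, h, hGsupp i j h])
        (fun i => by
          simp only [Matrix.sub_apply]
          rw [Finset.sum_sub_distrib, hG.2.2 i, hF.2.2 i, sub_self])
      have := congrArg (· + F) this
      simpa [sub_add_cancel] using this
    have hzero : ∀ i j, F i j = 0 → A i j = 0 ∧ B i j = 0 := by
      intro i j hij
      have h := congrFun (congrFun heq i) j
      simp only [Matrix.add_apply, Matrix.smul_apply, smul_eq_mul, hij] at h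
      have hA0 := hA.2.1 i j
      have hB0 := hB.2.1 i j
      constructor <;> nlinarith
    exact key A hA (fun i j h => (hzero i j h).1)

lemma symm_apply_mk_eq {n m : ℕ} {sizes : Fin m → ℕ} (e : Fin n ≃ (Σ b : Fin m, Fin (sizes b)))
    (j : Fin n) (b : Fin m) (hb : b = (e j).1) :
    e.symm ⟨b, Fin.cast (congrArg sizes hb.symm) (e j).2⟩ = j := by
  have : (⟨b, Fin.cast (congrArg sizes hb.symm) (e j).2⟩ : Σ b, Fin (sizes b)) = e j := by
    subst hb; rfl
  rw [this, Equiv.symm_apply_apply]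

lemma decomp_kern {n : ℕ} {F : Matrix (Fin n) (Fin n) ℝ}
    (hD : KatzDecomp n F) : Kern n F := by
  obtain ⟨m, sizes, e, hcross, hblocks⟩ := hD
  intro E hsym hsupp hrow
  have hEcross : ∀ i j, (e i).1 ≠ (e j).1 → E i j = 0 := fun i j h => hsupp i j (hcross i j h)
  have hfst : ∀ (b : Fin m) (x : Fin (sizes b)), (e (e.symm ⟨b, x⟩)).1 = b := fun b x => by simp
  have blockrow : ∀ (b : Fin m) (x : Fin (sizes b)),
      ∑ y, E (e.symm ⟨b, x⟩) (e.symm ⟨b, y⟩) = 0 := by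
    intro b x
    set i := e.symm ⟨b, x⟩ with hi
    have h1 : ∑ j, E i j = 0 := hrow i
    have h2 : ∑ p : Σ b', Fin (sizes b'), E i (e.symm p) = ∑ j, E i j :=
      Equiv.sum_comp e.symm _
    have h3 : ∑ p : Σ b', Fin (sizes b'), E i (e.symm p)
        = ∑ b', ∑ y, E i (e.symm ⟨b', y⟩) := by
      rw [← Finset.univ_sigma_univ, Finset.sum_sigma]
    have h4 : ∀ b', b' ≠ b → ∑ y, E i (e.symm ⟨b', y⟩) = 0 := by
      intro b' hb'
      apply Finset.sum_eq_zero
      intro y _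
      apply hEcross
      rw [hi, hfst, hfst]
      exact fun h => hb' h.symm
    have h5 : ∑ b', ∑ y, E i (e.symm ⟨b', y⟩) = ∑ y, E i (e.symm ⟨b, y⟩) := by
      rw [Finset.sum_eq_single b]
      · exact fun b' _ hb' => h4 b' hb'
      · exact fun h => absurd (mem_univ b) h
    rw [← h5, ← h3, h2, h1]
  have main : ∀ (b : Fin m) (x y : Fin (sizes b)),
      E (e.symm ⟨b, x⟩) (e.symm ⟨b, y⟩) = 0 := by
    intro b
    set Eb : Fin (sizes b) → Fin (sizes b) → ℝ :=
      fun x y => E (e.symm ⟨b, x⟩) (e.symm ⟨b, y⟩) with hEb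
    have hEbsym : ∀ x y, Eb x y = Eb y x := fun x y => hsym _ _
    rcases hblocks b with ⟨h1, hM⟩ | ⟨h2, hM⟩ | ⟨h3, hodd, hM⟩
    · -- size 1
      intro x y
      haveI : Subsingleton (Fin (sizes b)) := by rw [h1]; infer_instance
      have hxy : y = x := Subsingleton.elim _ _
      have := blockrow b x
      rw [Fintype.sum_subsingleton _ x] at this
      rw [hxy]
      exact this
    · -- size 2
      have hdiag : ∀ x, Eb x x = 0 := by
        intro x
        apply hsupp
        have := hM x x
        simpa using this
      intro x y
      by_cases hxy : x = y
      · rw [hxy]; exact hdiag y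
      · have huniv : (Finset.univ : Finset (Fin (sizes b))) = {x, y} := by
          symm
          rw [← Finset.card_eq_iff_eq_univ]
          rw [Finset.card_pair hxy, Fintype.card_fin, h2]
        have := blockrow b x
        rw [huniv, Finset.sum_pair hxy] at this
        have hd := hdiag x
        simp only [hEb] at hd
        rw [hd, zero_add] at this
        exact this
    · -- odd cycle
      haveI : NeZero (sizes b) := ⟨by omega⟩
      exact cycle_kernel h3 hodd Eb hEbsym
        (fun x y hadj => hsupp _ _ (by have := hM x y; rw [if_neg hadj] at this; exact this))
        (blockrow b)
  ext i j
  simp only [Matrix.zero_apply]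
  by_cases hb : (e i).1 = (e j).1
  · have hi : e.symm ⟨(e i).1, (e i).2⟩ = i := by
      simpa using congrArg e.symm (Sigma.eta (e i))
    have hj : e.symm ⟨(e i).1, Fin.cast (congrArg sizes hb.symm) (e j).2⟩ = j :=
      symm_apply_mk_eq e j (e i).1 hb
    rw [← hi, ← hj]
    exact main (e i).1 _ _
  · exact hEcross i j hb

section Helpers

variable {n : ℕ} {F : Matrix (Fin n) (Fin n) ℝ}

lemma Fsymm (hF : F ∈ symDS n) : ∀ i j, F i j = F j i := fun i j => hF.1.apply j i

lemma row_eq_of_one (hF : F ∈ symDS n) {i k : Fin n} (h1 : F i k = 1) :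
    ∀ j, j ≠ k → F i j = 0 := by
  intro j hj
  have h := hF.2.2 i
  rw [← Finset.add_sum_erase univ _ (mem_univ k), h1] at h
  have h0 : ∑ j' ∈ univ.erase k, F i j' = 0 := by linarith
  have := (Finset.sum_eq_zero_iff_of_nonneg (fun j' _ => hF.2.1 i j')).1 h0
  exact this j (by simp [hj])

lemma rowsum_two (hF : F ∈ symDS n) {i a b : Fin n} (hab : a ≠ b)
    (hsupp : ∀ c, F i c ≠ 0 → c = a ∨ c = b) : F i a + F i b = 1 := by
  have h := hF.2.2 i
  rw [← Finset.sum_subset (Finset.subset_univ ({a, b} : Finset (Fin n)))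
    (fun c _ hc => by
      by_contra hc0
      rcases hsupp c hc0 with rfl | rfl <;> simp at hc)] at h
  rwa [Finset.sum_pair hab] at h

end Helpers

section Blocks

variable {n : ℕ} {F : Matrix (Fin n) (Fin n) ℝ}

/-- The conclusion of the block-finding step. -/
def HasBlock (n : ℕ) (F : Matrix (Fin n) (Fin n) ℝ) : Prop :=
  ∃ (s : ℕ) (g : Fin s ↪ Fin n), s ≠ 0 ∧
    (∀ (x : Fin s) (j : Fin n), j ∉ Set.range g → F (g x) j = 0) ∧
    IsKatzBlock s (fun x y => F (g x) (g y))

lemma caseA (hF : F ∈ symDS n) {i : Fin n} (hii : F i i = 1) : HasBlock n F := by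
  refine ⟨1, ⟨fun _ => i, fun a b _ => Subsingleton.elim a b⟩, one_ne_zero, ?_, ?_⟩
  · intro x j hj
    apply row_eq_of_one hF hii
    intro hji
    exact hj ⟨0, hji.symm⟩
  · exact Or.inl ⟨rfl, fun x y => hii⟩

lemma caseB (hF : F ∈ symDS n) {i j : Fin n} (hij : i ≠ j) (h1 : F i j = 1) :
    HasBlock n F := by
  have h1' : F j i = 1 := by rw [Fsymm hF] at h1; exact h1
  have hrowi := row_eq_of_one hF h1
  have hrowj := row_eq_of_one hF h1'
  refine ⟨2, ⟨![i, j], ?_⟩, two_ne_zero, ?_, ?_⟩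
  · intro a b hab
    fin_cases a <;> fin_cases b <;> simp_all <;> exact absurd hab.symm hij
  · intro x k hk
    have hki : k ≠ i := fun h => hk ⟨0, by rw [h]; rfl⟩
    have hkj : k ≠ j := fun h => hk ⟨1, by rw [h]; rfl⟩
    fin_cases x
    · exact hrowi k hkj
    · exact hrowj k hki
  · refine Or.inr (Or.inl ⟨rfl, ?_⟩)
    intro x y
    fin_cases x <;> fin_cases y <;> simp
    · exact hrowi i hij
    · exact h1
    · exact h1'
    · exact hrowj j hij.symm

end Blocks

section Counting

variable {n : ℕ} {F : Matrix (Fin n) (Fin n) ℝ}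

lemma edge_card_le (hF : F ∈ symDS n) (hK : Kern n F) :
    (univ.filter (fun p : Fin n × Fin n => p.1 ≤ p.2 ∧ F p.1 p.2 ≠ 0)).card ≤ n := by
  classical
  set edges : Finset (Fin n × Fin n) :=
    univ.filter (fun p : Fin n × Fin n => p.1 ≤ p.2 ∧ F p.1 p.2 ≠ 0) with hedges
  set toMat : (↥edges → ℝ) → Matrix (Fin n) (Fin n) ℝ :=
    fun w i j => if h : ((min i j, max i j) : Fin n × Fin n) ∈ edges then w ⟨_, h⟩ else 0
    with htoMat
  have hsym : ∀ w i j, toMat w i j = toMat w j i := by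
    intro w i j
    simp only [htoMat]
    rw [min_comm, max_comm]
  have hsupp : ∀ (w) (i j : Fin n), F i j = 0 → toMat w i j = 0 := by
    intro w i j h0
    simp only [htoMat]
    rw [dif_neg]
    intro hmem
    rw [hedges, Finset.mem_filter] at hmem
    rcases le_total i j with hle | hle
    · rw [min_eq_left hle, max_eq_right hle] at hmem
      exact hmem.2.2 h0
    · rw [min_eq_right hle, max_eq_left hle] at hmem
      exact hmem.2.2 (by rw [← Fsymm hF i j]; exact h0)
  set L : (↥edges → ℝ) →ₗ[ℝ] (Fin n → ℝ) :=
    { toFun := fun w i => ∑ j, toMat w i j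
      map_add' := by
        intro w1 w2
        funext i
        show ∑ j, toMat (w1 + w2) i j = (∑ j, toMat w1 i j) + ∑ j, toMat w2 i j
        rw [← Finset.sum_add_distrib]
        apply Finset.sum_congr rfl
        intro j _
        simp only [htoMat, Pi.add_apply]
        by_cases h : ((min i j, max i j) : Fin n × Fin n) ∈ edges <;> simp [h]
      map_smul' := by
        intro c w
        funext i
        show ∑ j, toMat (c • w) i j = c * ∑ j, toMat w i j
        rw [Finset.mul_sum]
        apply Finset.sum_congr rfl
        intro j _
        simp only [htoMat, Pi.smul_apply, smul_eq_mul]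
        by_cases h : ((min i j, max i j) : Fin n × Fin n) ∈ edges <;> simp [h] }
    with hL
  have hkey : ∀ w, L w = 0 → w = 0 := by
    intro w hw
    have hmat : toMat w = 0 := by
      apply hK (toMat w) (hsym w) (hsupp w)
      intro i
      exact congrFun hw i
    funext e
    obtain ⟨⟨a, b⟩, he⟩ := e
    have he' := he
    rw [hedges, Finset.mem_filter] at he'
    have hab : ((min a b, max a b) : Fin n × Fin n) = (a, b) := by
      rw [min_eq_left he'.2.1, max_eq_right he'.2.1]
    have h2 : toMat w a b = w ⟨(a, b), he⟩ := by
      simp only [htoMat, hab]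
      rw [dif_pos he]
    have h3 := congrFun (congrFun hmat a) b
    rw [h2] at h3
    simpa using h3
  have hinj : Function.Injective L := by
    rw [← LinearMap.ker_eq_bot]
    exact LinearMap.ker_eq_bot'.2 hkey
  have hle := LinearMap.finrank_le_finrank_of_injective hinj
  have h1 : Module.finrank ℝ (↥edges → ℝ) = edges.card := by
    simp [Module.finrank_pi]
  have h2 : Module.finrank ℝ (Fin n → ℝ) = n := by
    simp [Module.finrank_pi]
  rw [h1, h2] at hle
  exact hle

lemma handshake (hF : F ∈ symDS n) :
    ∑ i, ((univ.filter (fun j => F i j ≠ 0)).card + (if F i i ≠ 0 then 1 else 0))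
      = 2 * (univ.filter (fun p : Fin n × Fin n => p.1 ≤ p.2 ∧ F p.1 p.2 ≠ 0)).card := by
  classical
  set P : Finset (Fin n × Fin n) := univ.filter (fun p => F p.1 p.2 ≠ 0) with hP
  set eL : Finset (Fin n × Fin n) :=
    univ.filter (fun p => p.1 = p.2 ∧ F p.1 p.2 ≠ 0) with heL
  set eNL : Finset (Fin n × Fin n) :=
    univ.filter (fun p => p.1 < p.2 ∧ F p.1 p.2 ≠ 0) with heNL
  set eNL' : Finset (Fin n × Fin n) :=
    univ.filter (fun p => p.2 < p.1 ∧ F p.1 p.2 ≠ 0) with heNL'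
  have step1 : ∑ i, (univ.filter (fun j => F i j ≠ 0)).card = P.card := by
    rw [Finset.card_eq_sum_card_fiberwise (f := Prod.fst) (t := univ)
      (fun x _ => mem_univ _)]
    apply Finset.sum_congr rfl
    intro i _
    have himg : P.filter (fun p => p.1 = i)
        = (univ.filter (fun j => F i j ≠ 0)).image (fun j => (i, j)) := by
      ext ⟨a, b⟩
      simp only [hP, Finset.mem_filter, Finset.mem_image, mem_univ, true_and,
        Finset.filter_filter]
      constructor
      · rintro ⟨hab, rfl⟩
        exact ⟨b, hab, rfl⟩
      · rintro ⟨j, hj, h⟩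
        obtain ⟨rfl, rfl⟩ := Prod.mk.injEq .. ▸ h
        exact ⟨hj, rfl⟩
    rw [himg, Finset.card_image_of_injective _ (fun a b h => by simpa using h)]
  have step2 : ∑ i, (if F i i ≠ 0 then (1:ℕ) else 0)
      = (univ.filter (fun i => F i i ≠ 0)).card := by
    rw [← Finset.sum_filter]
    simp
  have diag : eL.card = (univ.filter (fun i => F i i ≠ 0)).card := by
    have himg : eL = (univ.filter (fun i => F i i ≠ 0)).image (fun i => (i, i)) := by
      ext ⟨a, b⟩
      simp only [heL, Finset.mem_filter, Finset.mem_image, mem_univ, true_and]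
      constructor
      · rintro ⟨rfl, hab⟩
        exact ⟨a, hab, rfl⟩
      · rintro ⟨j, hj, h⟩
        obtain ⟨rfl, rfl⟩ := Prod.mk.injEq .. ▸ h
        exact ⟨rfl, hj⟩
    rw [himg, Finset.card_image_of_injective _ (fun a b h => by simpa using h)]
  have hPsplit : P.card = eL.card + eNL.card + eNL'.card := by
    have hdisj1 : Disjoint eL eNL := by
      rw [Finset.disjoint_filter]
      rintro p _ ⟨h1, -⟩ ⟨h2, -⟩
      exact absurd h1 (ne_of_lt h2)
    have hdisj2 : Disjoint (eL ∪ eNL) eNL' := by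
      rw [Finset.disjoint_left]
      rintro p hp hp'
      rw [heNL', Finset.mem_filter] at hp'
      rcases Finset.mem_union.1 hp with h | h
      · rw [heL, Finset.mem_filter] at h
        exact absurd h.2.1 (ne_of_gt hp'.2.1)
      · rw [heNL, Finset.mem_filter] at h
        exact absurd h.2.1 (lt_asymm hp'.2.1)
    have hunion : P = (eL ∪ eNL) ∪ eNL' := by
      ext ⟨a, b⟩
      simp only [hP, heL, heNL, heNL', Finset.mem_union, Finset.mem_filter, mem_univ,
        true_and]
      rcases lt_trichotomy a b with h | h | h
      · constructor
        · intro hab; exact Or.inl (Or.inr ⟨h, hab⟩)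
        · rintro ((⟨-, h2⟩ | ⟨-, h2⟩) | ⟨-, h2⟩) <;> exact h2
      · constructor
        · intro hab; exact Or.inl (Or.inl ⟨h, hab⟩)
        · rintro ((⟨-, h2⟩ | ⟨-, h2⟩) | ⟨-, h2⟩) <;> exact h2
      · constructor
        · intro hab; exact Or.inr ⟨h, hab⟩
        · rintro ((⟨-, h2⟩ | ⟨-, h2⟩) | ⟨-, h2⟩) <;> exact h2
    rw [hunion, Finset.card_union_of_disjoint hdisj2, Finset.card_union_of_disjoint hdisj1]
  have hswap : eNL'.card = eNL.card := by
    have himg : eNL' = eNL.image Prod.swap := by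
      ext ⟨a, b⟩
      simp only [heNL, heNL', Finset.mem_filter, Finset.mem_image, mem_univ, true_and]
      constructor
      · rintro ⟨hlt, hab⟩
        exact ⟨(b, a), ⟨hlt, by rw [← Fsymm hF a b]; exact hab⟩, rfl⟩
      · rintro ⟨⟨c, d⟩, ⟨hlt, hcd⟩, h⟩
        have : (d, c) = (a, b) := h
        obtain ⟨rfl, rfl⟩ := Prod.mk.injEq .. ▸ this
        exact ⟨hlt, by rw [Fsymm hF]; exact hcd⟩
    rw [himg, Finset.card_image_of_injective _ Prod.swap_injective]
  have hedges : (univ.filter (fun p : Fin n × Fin n => p.1 ≤ p.2 ∧ F p.1 p.2 ≠ 0)).card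
      = eL.card + eNL.card := by
    have hdisj1 : Disjoint eL eNL := by
      rw [Finset.disjoint_filter]
      rintro p _ ⟨h1, -⟩ ⟨h2, -⟩
      exact absurd h1 (ne_of_lt h2)
    have hunion : univ.filter (fun p : Fin n × Fin n => p.1 ≤ p.2 ∧ F p.1 p.2 ≠ 0)
        = eL ∪ eNL := by
      ext ⟨a, b⟩
      simp only [heL, heNL, Finset.mem_union, Finset.mem_filter, mem_univ, true_and]
      constructor
      · rintro ⟨hle, hab⟩
        rcases lt_or_eq_of_le hle with h | h
        · exact Or.inr ⟨h, hab⟩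
        · exact Or.inl ⟨h, hab⟩
      · rintro (⟨h1, h2⟩ | ⟨h1, h2⟩)
        · exact ⟨le_of_eq h1, h2⟩
        · exact ⟨le_of_lt h1, h2⟩
    rw [hunion, Finset.card_union_of_disjoint hdisj1]
  rw [Finset.sum_add_distrib, step1, step2, ← diag, hPsplit, hswap, hedges]
  ring
end Counting

section Degree

variable {n : ℕ} {F : Matrix (Fin n) (Fin n) ℝ}

lemma two_le_nbr (hF : F ∈ symDS n) (hno1 : ∀ i j : Fin n, F i j ≠ 1) (i : Fin n) :
    2 ≤ (univ.filter (fun j => F i j ≠ 0)).card := by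
  by_contra h
  push_neg at h
  interval_cases hc : (univ.filter (fun j => F i j ≠ 0)).card
  · have hemp := Finset.card_eq_zero.mp hc
    have : ∀ j, F i j = 0 := by
      intro j
      by_contra hj
      have : j ∈ univ.filter (fun j => F i j ≠ 0) := by simp [hj]
      simp [hemp] at this
    have h1 := hF.2.2 i
    rw [Finset.sum_eq_zero (fun j _ => this j)] at h1
    norm_num at h1
  · obtain ⟨k, hk⟩ := Finset.card_eq_one.mp hc
    have h1 := hF.2.2 i
    rw [← Finset.sum_filter_ne_zero, hk, Finset.sum_singleton] at h1
    exact hno1 i k h1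

lemma degree_two (hF : F ∈ symDS n) (hK : Kern n F) (hno1 : ∀ i j : Fin n, F i j ≠ 1)
    (i : Fin n) :
    F i i = 0 ∧ (univ.filter (fun j => F i j ≠ 0)).card = 2 := by
  classical
  set d : Fin n → ℕ :=
    fun i => (univ.filter (fun j => F i j ≠ 0)).card + (if F i i ≠ 0 then 1 else 0) with hd
  have hd2 : ∀ i, 2 ≤ d i := fun i => le_trans (two_le_nbr hF hno1 i) (Nat.le_add_right _ _)
  have hsum : ∑ i, d i ≤ 2 * n := by
    rw [hd]
    rw [handshake hF]
    exact Nat.mul_le_mul_left 2 (edge_card_le hF hK)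
  have hall : ∀ i, d i = 2 := by
    by_contra h
    push_neg at h
    obtain ⟨i0, hi0⟩ := h
    have hlt : ∑ i : Fin n, (2 : ℕ) < ∑ i, d i := by
      apply Finset.sum_lt_sum (fun i _ => hd2 i)
      exact ⟨i0, mem_univ i0, lt_of_le_of_ne (hd2 i0) (Ne.symm hi0)⟩
    rw [Finset.sum_const, card_univ, Fintype.card_fin, smul_eq_mul, mul_comm] at hlt
    omega
  have h2 := hall i
  have hle := two_le_nbr hF hno1 i
  rw [hd] at h2
  simp only at h2
  rcases eq_or_ne (F i i) 0 with h0 | h0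
  · rw [if_neg (by simpa using h0)] at h2
    exact ⟨h0, by omega⟩
  · rw [if_pos h0] at h2
    omega

lemma nbr_pack (hF : F ∈ symDS n) (hK : Kern n F) (hno1 : ∀ i j : Fin n, F i j ≠ 1)
    (i : Fin n) :
    ∃ a b : Fin n, a ≠ b ∧ a ≠ i ∧ b ≠ i ∧ F i a ≠ 0 ∧ F i b ≠ 0 ∧
      (∀ c, F i c ≠ 0 → c = a ∨ c = b) := by
  obtain ⟨hdiag, hcard⟩ := degree_two hF hK hno1 i
  obtain ⟨a, b, hab, hset⟩ := Finset.card_eq_two.mp hcard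
  have hmem : ∀ c, F i c ≠ 0 ↔ (c = a ∨ c = b) := by
    intro c
    constructor
    · intro hc
      have : c ∈ univ.filter (fun j => F i j ≠ 0) := by simp [hc]
      rw [hset] at this
      simpa using this
    · intro hc
      have : c ∈ ({a, b} : Finset (Fin n)) := by rcases hc with rfl | rfl <;> simp
      rw [← hset] at this
      simpa using this
  have ha : F i a ≠ 0 := (hmem a).mpr (Or.inl rfl)
  have hb : F i b ≠ 0 := (hmem b).mpr (Or.inr rfl)
  exact ⟨a, b, hab, fun h => ha (h ▸ hdiag), fun h => hb (h ▸ hdiag),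
    ha, hb, fun c hc => (hmem c).mp hc⟩

end Degree

section CaseC

variable {n : ℕ} {F : Matrix (Fin n) (Fin n) ℝ}

lemma caseC (hF : F ∈ symDS n) (hK : Kern n F) (hno1 : ∀ i j : Fin n, F i j ≠ 1)
    (hn : n ≠ 0) : HasBlock n F := by
  classical
  have hdiag : ∀ i, F i i = 0 := fun i => (degree_two hF hK hno1 i).1
  choose A B hAB hAi hBi hFA hFB huniq using nbr_pack hF hK hno1
  set other : Fin n → Fin n → Fin n := fun c p => if A c = p then B c else A c with hother
  have hother1 : ∀ c p, F c (other c p) ≠ 0 := by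
    intro c p
    simp only [hother]
    split
    · exact hFB c
    · exact hFA c
  have hother2 : ∀ c p, other c p ≠ p := by
    intro c p
    simp only [hother]
    split
    · rename_i h
      rw [← h]
      exact fun hh => (hAB c) hh.symm
    · rename_i h
      exact h
  have hother3 : ∀ c p q, F c p ≠ 0 → F c q ≠ 0 → q ≠ p → q = other c p := by
    intro c p q hp hq hqp
    rcases huniq c p hp with rfl | rfl
    · rcases huniq c q hq with rfl | rfl
      · exact absurd rfl hqp
      · simp only [hother, if_pos rfl]
    · rcases huniq c q hq with rfl | rfl
      · simp only [hother]
        rw [if_neg (hAB c)]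
      · exact absurd rfl hqp
  haveI : Nonempty (Fin n) := Fin.pos_iff_nonempty.1 (Nat.pos_of_ne_zero hn)
  set i0 : Fin n := Classical.arbitrary (Fin n) with hi0
  set w : ℕ → Fin n × Fin n :=
    fun k => Nat.rec (i0, A i0) (fun _ p => (p.2, other p.2 p.1)) k with hw
  set v : ℕ → Fin n := fun k => (w k).1 with hv
  have hvsucc : ∀ k, v (k + 1) = (w k).2 := fun k => rfl
  have hedge : ∀ k, F (v k) (v (k + 1)) ≠ 0 := by
    intro k
    cases k with
    | zero => exact hFA i0
    | succ k => exact hother1 _ _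
  have hstep : ∀ k, v (k + 2) ≠ v k := by
    intro k
    exact hother2 _ _
  have hnoloop : ∀ k, v (k + 1) ≠ v k := by
    intro k h
    exact hedge k (by rw [h]; exact hdiag (v k) ▸ (by simp [hdiag]))
  have hnbr : ∀ k c, F (v (k + 1)) c ≠ 0 → c = v k ∨ c = v (k + 2) := by
    intro k c hc
    by_cases hck : c = v k
    · exact Or.inl hck
    · right
      have h2 : v (k + 2) = other (v (k + 1)) (v k) := rfl
      rw [h2]
      exact hother3 _ _ _ (by rw [← Fsymm hF]; exact hedge k) hc hck
  -- first revisit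
  have hexQ : ∃ k, ∃ l, l < k ∧ v l = v k := by
    obtain ⟨a, b, hab, h⟩ := Finite.exists_ne_map_eq_of_infinite v
    rcases Nat.lt_or_ge a b with hl | hl
    · exact ⟨b, a, hl, h⟩
    · exact ⟨a, b, lt_of_le_of_ne hl (Ne.symm hab), h.symm⟩
  obtain ⟨m, ⟨t, htm, hvt⟩, hmin⟩ :
      ∃ m, (∃ l, l < m ∧ v l = v m) ∧ ∀ k, k < m → ¬∃ l, l < k ∧ v l = v k :=
    ⟨Nat.find hexQ, Nat.find_spec hexQ, fun k hk => Nat.find_min hexQ hk⟩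
  have hdist : ∀ a b, a < b → b < m → v a ≠ v b := by
    intro a b hab hbm h
    exact hmin b hbm ⟨a, hab, h⟩
  have ht0 : t = 0 := by
    by_contra ht
    have ht1 : 1 ≤ t := Nat.one_le_iff_ne_zero.2 ht
    have hFm : F (v (m - 1)) (v m) ≠ 0 := by
      have := hedge (m - 1)
      rwa [show m - 1 + 1 = m by omega] at this
    have hc : F (v t) (v (m - 1)) ≠ 0 := by
      rw [← hvt] at hFm
      rw [← Fsymm hF]
      exact hFm
    have hnb := hnbr (t - 1) (v (m - 1))
      (by rw [show t - 1 + 1 = t by omega]; exact hc)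
    rw [show t - 1 + 2 = t + 1 by omega] at hnb
    rw [show (t - 1 : ℕ) = t - 1 by rfl] at hnb
    have hnb' : v (m - 1) = v (t - 1) ∨ v (m - 1) = v (t + 1) := hnb
    rcases hnb' with h | h
    · exact hdist (t - 1) (m - 1) (by omega) (by omega) h.symm
    · rcases lt_trichotomy (t + 1) (m - 1) with hlt | heq | hgt
      · exact hdist (t + 1) (m - 1) hlt (by omega) h.symm
      · have hm2 : v (m - 2 + 2) = v (m - 2) := by
          rw [show m - 2 + 2 = m by omega, show m - 2 = t by omega, hvt]
        exact hstep (m - 2) hm2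
      · have htm1 : t = m - 1 := by omega
        have : v (m - 1 + 1) = v (m - 1) := by
          rw [show m - 1 + 1 = m by omega, ← hvt, htm1]
        exact hnoloop (m - 1) this
  subst ht0
  have hm3 : 3 ≤ m := by
    by_contra h
    push_neg at h
    interval_cases m
    · exact hnoloop 0 hvt.symm
    · exact hstep 0 hvt.symm
  have hinj : ∀ a b : ℕ, a < m → b < m → v a = v b → a = b := by
    intro a b ham hbm h
    rcases lt_trichotomy a b with hl | he | hl
    · exact absurd h (hdist a b hl hbm)
    · exact he
    · exact absurd h.symm (hdist b a hl ham)
  have hvm0 : v m = v 0 := hvt.symm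
  have hmod : ∀ k, k < m → v ((k + 1) % m) = v (k + 1) := by
    intro k hk
    rcases Nat.lt_or_ge (k + 1) m with h | h
    · rw [Nat.mod_eq_of_lt h]
    · have : k + 1 = m := by omega
      rw [this, Nat.mod_self, hvm0]
  -- neighbors of v m are v (m-1) and v 1
  have hvm1 : v (m + 1) = v 1 := by
    have h1 : F (v m) (v 1) ≠ 0 := by rw [hvm0]; exact hedge 0
    have h2 : v 1 ≠ v (m - 1) := fun h => hdist 1 (m - 1) (by omega) (by omega) h
    have h3 : F (v m) (v (m - 1)) ≠ 0 := by
      rw [← Fsymm hF]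
      have := hedge (m - 1)
      rwa [show m - 1 + 1 = m by omega] at this
    have h4 : v (m + 1) = other (v m) (v (m - 1)) := by
      have := hvsucc m
      rw [this]
      show (w m).2 = other (v m) (v (m-1))
      have hwm : w m = ((w (m-1)).2, other (w (m-1)).2 (w (m-1)).1) := by
        conv_lhs => rw [show m = (m-1) + 1 by omega]
      rw [hwm]
      have e1 : (w (m-1)).2 = v m := by rw [← hvsucc (m-1), show m - 1 + 1 = m by omega]
      simp only [e1]
      rfl
    rw [h4]
    exact (hother3 _ _ _ h3 h1 h2).symm
  have hnbr0 : ∀ c, F (v 0) c ≠ 0 → c = v 1 ∨ c = v (m - 1) := by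
    intro c hc
    have := hnbr (m - 1) c (by
      rw [show m - 1 + 1 = m by omega, hvm0]; exact hc)
    rw [show m - 1 + 2 = m + 1 by omega, hvm1] at this
    tauto
  -- full neighbor characterization
  have hcharac : ∀ k, k < m → ∀ c, F (v k) c ≠ 0 →
      c = v ((k + 1) % m) ∨ c = v ((k + m - 1) % m) := by
    intro k hk c hc
    rcases Nat.eq_zero_or_pos k with rfl | hk1
    · rw [show (0 + 1) % m = 1 by rw [Nat.mod_eq_of_lt]; omega,
        show (0 + m - 1) % m = m - 1 by rw [Nat.mod_eq_of_lt] <;> omega]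
      exact hnbr0 c hc
    · have := hnbr (k - 1) c (by rw [show k - 1 + 1 = k by omega]; exact hc)
      rw [show k - 1 + 2 = k + 1 by omega] at this
      rw [hmod k hk, show (k + m - 1) % m = k - 1 by
        rw [show k + m - 1 = (k - 1) + m by omega, Nat.add_mod_right, Nat.mod_eq_of_lt]; omega]
      tauto

  -- arithmetic helpers
  have hmpos : 0 < m := by omega
  have lem2 : ∀ k₀, k₀ < m → ((k₀ + m - 1) % m + 1) % m = k₀ := by
    intro k₀ hk
    rcases Nat.eq_zero_or_pos k₀ with rfl | h1
    · rw [show (0 + m - 1) = m - 1 by omega, Nat.mod_eq_of_lt (show m - 1 < m by omega),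
        show m - 1 + 1 = m by omega, Nat.mod_self]
    · rw [show k₀ + m - 1 = (k₀ - 1) + m by omega, Nat.add_mod_right,
        Nat.mod_eq_of_lt (show k₀ - 1 < m by omega), show k₀ - 1 + 1 = k₀ by omega,
        Nat.mod_eq_of_lt hk]
  have lem3 : ∀ k k₀, k < m → k₀ < m → (k + 1) % m = k₀ → k = (k₀ + m - 1) % m := by
    intro k k₀ hk hk0 h
    rcases Nat.lt_or_ge (k + 1) m with h1 | h1
    · rw [Nat.mod_eq_of_lt h1] at h
      subst h
      rw [show k + 1 + m - 1 = k + m by omega, Nat.add_mod_right, Nat.mod_eq_of_lt hk]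
    · have hkm : k = m - 1 := by omega
      have h0 : (k + 1) % m = 0 := by rw [show k + 1 = m by omega, Nat.mod_self]
      rw [h0] at h
      subst h
      rw [show (0 + m - 1) = m - 1 by omega, Nat.mod_eq_of_lt (by omega), hkm]
  -- edge weights
  set u : ℕ → ℝ := fun k => F (v k) (v (k + 1)) with hu
  have hrel : ∀ k, u k + u (k + 1) = 1 := by
    intro k
    have hne : v k ≠ v (k + 2) := Ne.symm (hstep k)
    have h := rowsum_two hF hne (fun c hc => hnbr k c hc)
    rw [Fsymm hF (v (k + 1)) (v k)] at h
    exact h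
  have hmod2 : ∀ k, k < m → F (v k) (v ((k + 1) % m)) ≠ 0 := fun k hk => by
    rw [hmod k hk]; exact hedge k
  -- m is odd
  have hodd : Odd m := by
    by_contra hoddc
    rw [Nat.not_odd_iff_even] at hoddc
    set w2 : ℕ → ℝ := fun k => (-1) ^ k with hw2
    set EM : Matrix (Fin n) (Fin n) ℝ := fun i j =>
      (∑ k ∈ Finset.range m, if i = v k ∧ j = v ((k + 1) % m) then w2 k else 0)
      + (∑ k ∈ Finset.range m, if j = v k ∧ i = v ((k + 1) % m) then w2 k else 0) with hEM
    have hsymE : ∀ i j, EM i j = EM j i := by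
      intro i j
      simp only [hEM]
      rw [add_comm]
    have hsuppE : ∀ i j, F i j = 0 → EM i j = 0 := by
      intro i j h0
      simp only [hEM]
      rw [Finset.sum_eq_zero, Finset.sum_eq_zero, add_zero]
      · intro k hk
        rw [Finset.mem_range] at hk
        rw [if_neg]
        rintro ⟨rfl, rfl⟩
        exact hmod2 k hk (by rw [← Fsymm hF]; exact h0)
      · intro k hk
        rw [Finset.mem_range] at hk
        rw [if_neg]
        rintro ⟨rfl, rfl⟩
        exact hmod2 k hk h0
    have hrowE : ∀ i, ∑ j, EM i j = 0 := by
      intro i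
      simp only [hEM]
      rw [Finset.sum_add_distrib, Finset.sum_comm, Finset.sum_comm
        (s := (univ : Finset (Fin n)))]
      have h1 : ∀ k ∈ Finset.range m,
          (∑ j, if i = v k ∧ j = v ((k + 1) % m) then w2 k else 0)
            = if i = v k then w2 k else 0 := by
        intro k _
        by_cases hik : i = v k <;> simp [hik]
      have h2 : ∀ k ∈ Finset.range m,
          (∑ j, if j = v k ∧ i = v ((k + 1) % m) then w2 k else 0)
            = if i = v ((k + 1) % m) then w2 k else 0 := by
        intro k _
        by_cases hik : i = v ((k + 1) % m) <;> simp [hik]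
      rw [Finset.sum_congr rfl h1, Finset.sum_congr rfl h2]
      by_cases hi : ∃ k₀, k₀ < m ∧ i = v k₀
      · obtain ⟨k₀, hk₀, rfl⟩ := hi
        have e1 : ∑ k ∈ Finset.range m, (if v k₀ = v k then w2 k else 0) = w2 k₀ := by
          rw [Finset.sum_eq_single k₀]
          · rw [if_pos rfl]
          · intro k hk hkk
            rw [Finset.mem_range] at hk
            rw [if_neg]
            intro h
            exact hkk (hinj k k₀ hk hk₀ h.symm)
          · intro h
            exact absurd (Finset.mem_range.2 hk₀) h
        have hk₁m : (k₀ + m - 1) % m < m := Nat.mod_lt _ hmpos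
        have e2 : ∑ k ∈ Finset.range m, (if v k₀ = v ((k + 1) % m) then w2 k else 0)
            = w2 ((k₀ + m - 1) % m) := by
          rw [Finset.sum_eq_single ((k₀ + m - 1) % m)]
          · rw [if_pos (by rw [lem2 k₀ hk₀])]
          · intro k hk hkk
            rw [Finset.mem_range] at hk
            rw [if_neg]
            intro h
            have hh : (k + 1) % m = k₀ := hinj _ _ (Nat.mod_lt _ hmpos) hk₀ h.symm
            exact hkk (lem3 k k₀ hk hk₀ hh)
          · intro h
            exact absurd (Finset.mem_range.2 hk₁m) h
        rw [e1, e2]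
        simp only [hw2]
        rcases Nat.eq_zero_or_pos k₀ with rfl | h1
        · rw [show (0 + m - 1) % m = m - 1 by
            rw [show 0 + m - 1 = m - 1 by omega, Nat.mod_eq_of_lt (show m - 1 < m by omega)]]
          have ho : Odd (m - 1) := Nat.Even.sub_odd (by omega) hoddc odd_one
          rw [ho.neg_one_pow]
          norm_num
        · rw [show (k₀ + m - 1) % m = k₀ - 1 by
            rw [show k₀ + m - 1 = (k₀ - 1) + m by omega, Nat.add_mod_right,
              Nat.mod_eq_of_lt (show k₀ - 1 < m by omega)]]
          have hps : (-1 : ℝ) ^ k₀ = -(-1 : ℝ) ^ (k₀ - 1) := by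
            conv_lhs => rw [show k₀ = (k₀ - 1) + 1 by omega]
            rw [pow_succ]
            ring
          rw [hps]
          ring
      · push_neg at hi
        rw [Finset.sum_eq_zero, Finset.sum_eq_zero, add_zero]
        · intro k hk
          rw [Finset.mem_range] at hk
          rw [if_neg (hi ((k + 1) % m) (Nat.mod_lt _ hmpos))]
        · intro k hk
          rw [Finset.mem_range] at hk
          rw [if_neg (hi k hk)]
    have hzero := hK EM hsymE hsuppE hrowE
    have hval : EM (v 0) (v 1) = 1 := by
      simp only [hEM]
      have e1 : ∑ k ∈ Finset.range m,
          (if v 0 = v k ∧ v 1 = v ((k + 1) % m) then w2 k else 0) = 1 := by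
        rw [Finset.sum_eq_single 0]
        · rw [if_pos ⟨rfl, by rw [show (0 + 1) % m = 1 by rw [Nat.mod_eq_of_lt]; omega]⟩]
          simp [hw2]
        · intro k hk hk0
          rw [Finset.mem_range] at hk
          rw [if_neg]
          rintro ⟨h, -⟩
          exact hk0 (hinj k 0 hk (by omega) h.symm)
        · intro h
          exact absurd (Finset.mem_range.2 (by omega)) h
      have e2 : ∑ k ∈ Finset.range m,
          (if v 1 = v k ∧ v 0 = v ((k + 1) % m) then w2 k else 0) = 0 := by
        apply Finset.sum_eq_zero
        intro k hk
        rw [Finset.mem_range] at hk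
        rw [if_neg]
        rintro ⟨h1, h2⟩
        have hk1 : k = 1 := hinj k 1 hk (by omega) h1.symm
        subst hk1
        rw [show (1 + 1) % m = 2 by rw [Nat.mod_eq_of_lt]; omega] at h2
        exact hstep 0 h2.symm
      rw [e1, e2, add_zero]
    rw [hzero] at hval
    simp at hval
  -- all edge weights are 1/2
  have halt : ∀ k, u k - 1/2 = (-1 : ℝ) ^ k * (u 0 - 1/2) := by
    intro k
    induction k with
    | zero => simp
    | succ k ih =>
      have h2 : u (k + 1) - 1/2 = -(u k - 1/2) := by linarith [hrel k]
      rw [h2, ih, pow_succ]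
      ring
  have hu0 : u 0 = 1/2 := by
    have hne : v 1 ≠ v (m - 1) := fun h => hdist 1 (m - 1) (by omega) (by omega) h
    have h := rowsum_two hF hne (fun c hc => hnbr0 c hc)
    have e1 : F (v 0) (v (m - 1)) = u (m - 1) := by
      show F (v 0) (v (m - 1)) = F (v (m - 1)) (v (m - 1 + 1))
      rw [show m - 1 + 1 = m by omega, hvm0, Fsymm hF]
    have e0 : F (v 0) (v 1) = u 0 := rfl
    rw [e0, e1] at h
    have h2 := halt (m - 1)
    have hev : Even (m - 1) := Nat.Odd.sub_odd hodd odd_one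
    rw [hev.neg_one_pow, one_mul] at h2
    linarith
  have huk : ∀ k, u k = 1/2 := by
    intro k
    have h := halt k
    rw [hu0] at h
    norm_num at h
    linarith
  -- assemble the block
  refine ⟨m, ⟨fun x => v x.val, fun x y h => Fin.ext (hinj _ _ x.isLt y.isLt h)⟩,
    by omega, ?_, Or.inr (Or.inr ⟨hm3, hodd, ?_⟩)⟩
  · intro x j hj
    by_contra hjne
    rcases hcharac x.val x.isLt j hjne with h | h
    · exact hj ⟨⟨(x.val + 1) % m, Nat.mod_lt _ hmpos⟩, h.symm⟩
    · exact hj ⟨⟨(x.val + m - 1) % m, Nat.mod_lt _ hmpos⟩, h.symm⟩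
  · intro x y
    by_cases hadj : cycleAdj m x y
    · rw [if_pos hadj]
      rcases hadj with h | h
      · show F (v x.val) (v y.val) = 1/2
        rw [← h, hmod x.val x.isLt]
        exact huk x.val
      · show F (v x.val) (v y.val) = 1/2
        rw [Fsymm hF, ← h, hmod y.val y.isLt]
        exact huk y.val
    · rw [if_neg hadj]
      by_contra hne0
      rcases hcharac x.val x.isLt (v y.val) hne0 with h | h
      · have hy : y.val = (x.val + 1) % m := hinj y.val _ y.isLt (Nat.mod_lt _ hmpos) h
        exact hadj (Or.inl hy.symm)
      · have hy : y.val = (x.val + m - 1) % m := hinj _ _ y.isLt (Nat.mod_lt _ hmpos) h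
        apply hadj
        right
        rw [hy]
        exact lem2 x.val x.isLt


end CaseC

section Assemble

def sigmaConsEquiv (s : ℕ) {m : ℕ} (sizes' : Fin m → ℕ) :
    (Fin s ⊕ (Σ b : Fin m, Fin (sizes' b)))
      ≃ Σ b : Fin (m + 1), Fin (Fin.cases (motive := fun _ => ℕ) s sizes' b) where
  toFun x := Sum.rec (fun a => ⟨0, a⟩) (fun p => ⟨p.1.succ, p.2⟩) x
  invFun p := Fin.cases
    (motive := fun b => Fin (Fin.cases (motive := fun _ => ℕ) s sizes' b) →
      (Fin s ⊕ (Σ b : Fin m, Fin (sizes' b))))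
    (fun a => Sum.inl a) (fun b x => Sum.inr ⟨b, x⟩) p.1 p.2
  left_inv x := by
    rcases x with a | ⟨b, x⟩
    · rfl
    · rfl
  right_inv p := by
    obtain ⟨b, x⟩ := p
    induction b using Fin.cases with
    | zero => rfl
    | succ b => rfl

variable {n : ℕ} {F : Matrix (Fin n) (Fin n) ℝ}

lemma find_block (hn : n ≠ 0) (hF : F ∈ symDS n) (hK : Kern n F) : HasBlock n F := by
  by_cases hA : ∃ i, F i i = 1
  · obtain ⟨i, h⟩ := hA
    exact caseA hF h
  · by_cases hB : ∃ i j, i ≠ j ∧ F i j = 1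
    · obtain ⟨i, j, hij, h⟩ := hB
      exact caseB hF hij h
    · push_neg at hA hB
      refine caseC hF hK (fun i j h1 => ?_) hn
      by_cases hij : i = j
      · exact hA i (hij ▸ h1)
      · exact hB i j hij h1

theorem kern_decomp : ∀ n, ∀ F : Matrix (Fin n) (Fin n) ℝ,
    F ∈ symDS n → Kern n F → KatzDecomp n F := by
  intro n
  induction n using Nat.strong_induction_on with
  | _ n IH =>
    intro F hF hK
    rcases Nat.eq_zero_or_pos n with rfl | hn
    · exact ⟨0, Fin.elim0, Equiv.equivOfIsEmpty _ _, fun i => i.elim0, fun b => b.elim0⟩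
    · classical
      obtain ⟨s, g, hs0, hclosure, hblock⟩ := find_block (by omega) hF hK
      have hsn : s ≤ n := by
        have := Fintype.card_le_of_embedding g
        simpa using this
      -- the complement
      have hcardc : Fintype.card {i : Fin n // i ∉ Set.range ⇑g} = n - s := by
        rw [Fintype.card_subtype_compl]
        congr 1
        · simp
        · rw [Set.card_range_of_injective g.injective, Fintype.card_fin]
      set c : {i : Fin n // i ∉ Set.range ⇑g} ≃ Fin (n - s) :=
        Fintype.equivFinOfCardEq hcardc with hc
      set ι : Fin (n - s) → Fin n := fun x => (c.symm x).val with hι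
      have hιr : ∀ x, ι x ∉ Set.range ⇑g := fun x => (c.symm x).2
      have hcι : ∀ (x : Fin (n - s)) (h : ι x ∉ Set.range ⇑g), c ⟨ι x, h⟩ = x := by
        intro x h
        have : (⟨ι x, h⟩ : {i : Fin n // i ∉ Set.range ⇑g}) = c.symm x := Subtype.ext rfl
        rw [this, Equiv.apply_symm_apply]
      have hgz : ∀ (x : Fin s) (j : Fin n), j ∉ Set.range ⇑g → F (g x) j = 0 := hclosure
      have hzg : ∀ (i : Fin n), i ∉ Set.range ⇑g → ∀ (x : Fin s), F i (g x) = 0 := by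
        intro i hi x
        rw [Fsymm hF]
        exact hclosure x i hi
      -- sum splitting
      have himg : ∀ (f : Fin n → ℝ), (∀ j, j ∈ Set.range ⇑g → f j = 0) →
          ∑ y : Fin (n - s), f (ι y) = ∑ j, f j := by
        intro f hf
        have hinj2 : ∀ x ∈ (univ : Finset (Fin (n - s))), ∀ y ∈ univ, ι x = ι y → x = y :=
          fun x _ y _ h => c.symm.injective (Subtype.ext h)
        rw [← Finset.sum_image hinj2]
        apply Finset.sum_subset (Finset.subset_univ _)
        intro j _ hj
        apply hf
        by_contra hjr
        exact hj (Finset.mem_image.2 ⟨c ⟨j, hjr⟩, mem_univ _, by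
          simp only [hι]
          rw [Equiv.symm_apply_apply]⟩)
      set F' : Matrix (Fin (n - s)) (Fin (n - s)) ℝ := fun x y => F (ι x) (ι y) with hF'
      have hF'mem : F' ∈ symDS (n - s) := by
        refine ⟨?_, fun x y => hF.2.1 _ _, ?_⟩
        · show Matrix.transpose F' = F'
          ext x y
          exact Fsymm hF (ι y) (ι x)
        · intro x
          have := himg (fun j => F (ι x) j) (fun j hj => by
            obtain ⟨z, rfl⟩ := hj
            exact hzg (ι x) (hιr x) z)
          rw [show ∑ y : Fin (n-s), F' x y = ∑ y : Fin (n-s), F (ι x) (ι y) from rfl, this]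
          exact hF.2.2 (ι x)
      have hK' : Kern (n - s) F' := by
        intro E' hsym' hsupp' hrow'
        set E : Matrix (Fin n) (Fin n) ℝ := fun i j =>
          if hi : i ∈ Set.range ⇑g then 0 else
            if hj : j ∈ Set.range ⇑g then 0 else E' (c ⟨i, hi⟩) (c ⟨j, hj⟩) with hE
        have hEpos : ∀ (i j : Fin n), i ∈ Set.range ⇑g → E i j = 0 := by
          intro i j hi
          simp only [hE]
          rw [dif_pos hi]
        have hEpos' : ∀ (i j : Fin n), j ∈ Set.range ⇑g → E i j = 0 := by
          intro i j hj
          simp only [hE]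
          by_cases hi : i ∈ Set.range ⇑g
          · rw [dif_pos hi]
          · rw [dif_neg hi, dif_pos hj]
        have hEneg : ∀ (i j : Fin n) (hi : i ∉ Set.range ⇑g) (hj : j ∉ Set.range ⇑g),
            E i j = E' (c ⟨i, hi⟩) (c ⟨j, hj⟩) := by
          intro i j hi hj
          simp only [hE]
          rw [dif_neg hi, dif_neg hj]
        have hEval : ∀ x y : Fin (n - s), E (ι x) (ι y) = E' x y := by
          intro x y
          rw [hEneg _ _ (hιr x) (hιr y), hcι, hcι]
        have hEzero : E = 0 := by
          apply hK E
          · intro i j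
            by_cases hi : i ∈ Set.range ⇑g
            · by_cases hj : j ∈ Set.range ⇑g
              · rw [hEpos _ _ hi, hEpos _ _ hj]
              · rw [hEpos _ _ hi, hEpos' _ _ hi]
            · by_cases hj : j ∈ Set.range ⇑g
              · rw [hEpos' _ _ hj, hEpos _ _ hj]
              · rw [hEneg _ _ hi hj, hEneg _ _ hj hi]
                exact hsym' _ _
          · intro i j h0
            by_cases hi : i ∈ Set.range ⇑g
            · exact hEpos _ _ hi
            · by_cases hj : j ∈ Set.range ⇑g
              · exact hEpos' _ _ hj
              · rw [hEneg _ _ hi hj]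
                apply hsupp'
                show F (ι (c ⟨i, hi⟩)) (ι (c ⟨j, hj⟩)) = 0
                simp only [hι]
                rw [Equiv.symm_apply_apply, Equiv.symm_apply_apply]
                exact h0
          · intro i
            by_cases hi : i ∈ Set.range ⇑g
            · exact Finset.sum_eq_zero (fun j _ => hEpos _ _ hi)
            · have hz : ∀ j, j ∈ Set.range ⇑g → E i j = 0 := fun j hj => hEpos' _ _ hj
              rw [← himg (fun j => E i j) hz]
              have hterm : ∀ y : Fin (n - s), E i (ι y) = E' (c ⟨i, hi⟩) y := by
                intro y
                rw [hEneg _ _ hi (hιr y), hcι]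
              rw [Finset.sum_congr rfl (fun y _ => hterm y)]
              exact hrow' _
        funext x y
        rw [← hEval x y, hEzero]
        rfl
      obtain ⟨m', sizes', e', hcross', hblocks'⟩ :=
        IH (n - s) (by omega) F' hF'mem hK'
      -- assemble
      set sizes : Fin (m' + 1) → ℕ := Fin.cases s sizes' with hsizes
      set E3 : {i : Fin n // i ∉ Set.range ⇑g} ≃ Σ b : Fin m', Fin (sizes' b) :=
        c.trans e' with hE3
      set e : Fin n ≃ Σ b : Fin (m' + 1), Fin (sizes b) :=
        ((Equiv.sumCompl (fun i => i ∈ Set.range ⇑g)).symm.trans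
          (((Equiv.ofInjective ⇑g g.injective).symm.sumCongr E3).trans
            (sigmaConsEquiv s sizes'))) with he
      have he1 : ∀ x : Fin s, e (g x) = ⟨0, x⟩ := by
        intro x
        simp only [he, Equiv.trans_apply]
        rw [Equiv.sumCompl_symm_apply_of_pos (p := fun i => i ∈ Set.range ⇑g) (show g x ∈ Set.range ⇑g from ⟨x, rfl⟩)]
        simp only [Equiv.sumCongr_apply, Sum.map_inl]
        rw [Equiv.ofInjective_symm_apply]
        rfl
      have he2 : ∀ (i : Fin n) (hi : i ∉ Set.range ⇑g),
          e i = ⟨(E3 ⟨i, hi⟩).1.succ, (E3 ⟨i, hi⟩).2⟩ := by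
        intro i hi
        simp only [he, Equiv.trans_apply]
        rw [Equiv.sumCompl_symm_apply_of_neg (p := fun i => i ∈ Set.range ⇑g) hi]
        simp only [Equiv.sumCongr_apply, Sum.map_inr]
        rfl
      have hs0' : ∀ x : Fin s, e.symm ⟨0, x⟩ = g x := by
        intro x
        rw [← he1 x, Equiv.symm_apply_apply]
      have hssucc : ∀ (b : Fin m') (x : Fin (sizes' b)),
          e.symm ⟨b.succ, x⟩ = ι (e'.symm ⟨b, x⟩) := by
        intro b x
        have hj : ι (e'.symm ⟨b, x⟩) ∉ Set.range ⇑g := hιr _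
        have h2 : E3 ⟨ι (e'.symm ⟨b, x⟩), hj⟩ = ⟨b, x⟩ := by
          simp only [hE3, Equiv.trans_apply]
          rw [hcι, Equiv.apply_symm_apply]
        have := he2 (ι (e'.symm ⟨b, x⟩)) hj
        rw [h2] at this
        rw [← this, Equiv.symm_apply_apply]
      refine ⟨m' + 1, sizes, e, ?_, ?_⟩
      · -- cross zeros
        intro i j hne
        by_cases hi : i ∈ Set.range ⇑g
        · obtain ⟨x, rfl⟩ := hi
          by_cases hj : j ∈ Set.range ⇑g
          · obtain ⟨y, rfl⟩ := hj
            rw [he1 x, he1 y] at hne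
            exact absurd rfl hne
          · exact hclosure x j hj
        · by_cases hj : j ∈ Set.range ⇑g
          · obtain ⟨y, rfl⟩ := hj
            exact hzg i hi y
          · rw [he2 i hi, he2 j hj] at hne
            have hbne : (E3 ⟨i, hi⟩).1 ≠ (E3 ⟨j, hj⟩).1 := by
              intro h
              exact hne (by simp [h])
            have := hcross' (c ⟨i, hi⟩) (c ⟨j, hj⟩) (by
              simp only [hE3, Equiv.trans_apply] at hbne
              exact hbne)
            show F i j = 0
            have hFij : F' (c ⟨i, hi⟩) (c ⟨j, hj⟩) = F i j := by
              show F (ι (c ⟨i, hi⟩)) (ι (c ⟨j, hj⟩)) = F i j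
              simp only [hι]
              rw [Equiv.symm_apply_apply, Equiv.symm_apply_apply]
            rw [← hFij]
            exact this
      · -- blocks
        intro b
        induction b using Fin.cases with
        | zero =>
          have heq : (fun x y : Fin s => F (e.symm ⟨0, x⟩) (e.symm ⟨0, y⟩))
              = fun x y : Fin s => F (g x) (g y) := by
            funext x y
            rw [hs0', hs0']
          exact heq ▸ hblock
        | succ b =>
          have heq : (fun x y : Fin (sizes' b) => F (e.symm ⟨b.succ, x⟩) (e.symm ⟨b.succ, y⟩))
              = fun x y : Fin (sizes' b) => F' (e'.symm ⟨b, x⟩) (e'.symm ⟨b, y⟩) := by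
            funext x y
            rw [hssucc, hssucc]
          exact heq ▸ hblocks' b

end Assemble

/-- Katz's theorem: a symmetric doubly stochastic matrix `F` is an extreme point of the
polytope of symmetric doubly stochastic matrices if and only if, after a simultaneous
permutation of rows and columns, `F` is block diagonal with blocks `[1]`,
`[[0,1],[1,0]]`, or `(1/2)A(C_{2j-1})` for odd cycles of length `2j-1 ≥ 3`. -/
theorem katz_extreme_points (n : ℕ) (F : Matrix (Fin n) (Fin n) ℝ) (hF : F ∈ symDS n) :
    F ∈ Set.extremePoints ℝ (symDS n) ↔
      ∃ (m : ℕ) (sizes : Fin m → ℕ) (e : Fin n ≃ (Σ b : Fin m, Fin (sizes b))),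
        (∀ i j : Fin n, (e i).1 ≠ (e j).1 → F i j = 0) ∧
        ∀ b : Fin m,
          IsKatzBlock (sizes b) (fun x y => F (e.symm ⟨b, x⟩) (e.symm ⟨b, y⟩)) := by
  rw [extreme_iff_kern hF]
  constructor
  · intro hK
    exact kern_decomp n F hF hK
  · intro hD
    exact decomp_kern hD
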